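/- With ψ(x,y) = (1/κ)·arcsinh(κx/y), the function I¹(x,y) = ψ(x,y)^{-2}·( ln( (y/x)·ψ(x,y)·(1 + κ²x²/y²)^{1/4} ) + η μ x²/2 ) satisfies the interior boundary condition lim_{x→0} I¹(x,y) = κ²/12 + η μ y²/2 for every fixed y > 0. -/

import Mathlib

open Filter

noncomputable def psiHW (κ x y : ℝ) : ℝ := (1 / κ) * Real.arsinh (κ * x / y)

noncomputable def I1HW (κ η μ x y : ℝ) : ℝ :=
  (psiHW κ x y) ^ (-2 : ℤ) *
    (Real.log ((y / x) * psiHW κ x y * (1 + κ ^ 2 * x ^ 2 / y ^ 2) ^ ((1 : ℝ) / 4))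
      + η * μ * x ^ 2 / 2)

/-- `arsinh t ≠ t` for `t ≠ 0`. -/
lemma arsinh_ne_self {t : ℝ} (ht : t ≠ 0) : Real.arsinh t ≠ t := by
  rcases ht.lt_or_gt with h | h
  · have h2 : Real.sinh t < t := Real.sinh_lt_self_iff.mpr h
    have := Real.arsinh_strictMono h2
    rw [Real.arsinh_sinh] at this
    exact ne_of_gt this
  · have h2 : t < Real.sinh t := Real.self_lt_sinh_iff.mpr h
    have := Real.arsinh_strictMono h2
    rw [Real.arsinh_sinh] at this
    exact ne_of_lt this

/-- `arsinh t / t → 1` as `t → 0`. -/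
lemma tendsto_arsinh_div : Tendsto (fun t : ℝ => Real.arsinh t / t)
    (nhdsWithin 0 {(0:ℝ)}ᶜ) (nhds 1) := by
  have h := hasDerivAt_iff_tendsto_slope.mp (Real.hasDerivAt_arsinh 0)
  have e : (Real.sqrt (1 + (0:ℝ) ^ 2))⁻¹ = 1 := by norm_num
  rw [e] at h
  refine h.congr' ?_
  filter_upwards [self_mem_nhdsWithin] with t ht
  simp [slope_def_field, Real.arsinh_zero, div_eq_inv_mul]

/-- `(arsinh t - t)/t³ → -1/6` as `t → 0`, via L'Hôpital. -/
lemma tendsto_arsinh_sub_div : Tendsto (fun t : ℝ => (Real.arsinh t - t) / t ^ 3)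
    (nhdsWithin 0 {(0:ℝ)}ᶜ) (nhds (-(1/6))) := by
  have key : ∀ t : ℝ, t ≠ 0 → ((Real.sqrt (1 + t ^ 2))⁻¹ - 1) / (3 * t ^ 2)
      = -(1 / (3 * Real.sqrt (1 + t ^ 2) * (1 + Real.sqrt (1 + t ^ 2)))) := by
    intro t ht
    have h1 : (0:ℝ) < 1 + t ^ 2 := by positivity
    have hs : 0 < Real.sqrt (1 + t ^ 2) := Real.sqrt_pos.mpr h1
    have hsq : Real.sqrt (1 + t ^ 2) ^ 2 = 1 + t ^ 2 := Real.sq_sqrt h1.le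
    field_simp
    nlinarith [hsq, hs]
  have hcont : Tendsto (fun t : ℝ =>
      -(1 / (3 * Real.sqrt (1 + t ^ 2) * (1 + Real.sqrt (1 + t ^ 2)))))
      (nhds 0) (nhds (-(1/6))) := by
    have hc : Continuous (fun t : ℝ =>
        -(1 / (3 * Real.sqrt (1 + t ^ 2) * (1 + Real.sqrt (1 + t ^ 2))))) := by
      apply Continuous.neg
      apply Continuous.div continuous_const
      · fun_prop
      · intro t
        have h1 : (0:ℝ) < 1 + t ^ 2 := by positivity
        have hs : 0 < Real.sqrt (1 + t ^ 2) := Real.sqrt_pos.mpr h1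
        positivity
    have h0 := hc.tendsto 0
    convert h0 using 2
    norm_num
  apply HasDerivAt.lhopital_zero_nhdsNE (f' := fun t => (Real.sqrt (1 + t ^ 2))⁻¹ - 1)
      (g' := fun t => 3 * t ^ 2)
  · exact Eventually.of_forall fun t => (Real.hasDerivAt_arsinh t).sub (hasDerivAt_id t)
  · exact Eventually.of_forall fun t => by simpa using hasDerivAt_pow 3 t
  · filter_upwards [self_mem_nhdsWithin] with t ht
    simp only [Set.mem_compl_iff, Set.mem_singleton_iff] at ht
    positivity
  · have hc : Continuous (fun t => Real.arsinh t - t) := Real.continuous_arsinh.sub continuous_id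
    have := hc.tendsto 0
    simp only [Real.arsinh_zero, sub_zero] at this
    exact this.mono_left nhdsWithin_le_nhds
  · have := (continuous_pow 3).tendsto (0:ℝ)
    norm_num at this
    exact (by simpa using this.mono_left (nhdsWithin_le_nhds : nhdsWithin (0:ℝ) {(0:ℝ)}ᶜ ≤ _))
  · refine (hcont.mono_left nhdsWithin_le_nhds).congr' ?_
    filter_upwards [self_mem_nhdsWithin] with t ht
    simp only [Set.mem_compl_iff, Set.mem_singleton_iff] at ht
    exact (key t ht).symm

/-- `log (1+u)/u → 1` as `u → 0`. -/
lemma tendsto_log_one_add : Tendsto (fun u : ℝ => Real.log (1 + u) / u)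
    (nhdsWithin 0 {(0:ℝ)}ᶜ) (nhds 1) := by
  have h : HasDerivAt (fun u : ℝ => Real.log (1 + u)) 1 0 := by
    have := ((hasDerivAt_id (0:ℝ)).const_add 1).log (by norm_num)
    simpa using this
  have h2 := hasDerivAt_iff_tendsto_slope.mp h
  refine h2.congr' ?_
  filter_upwards [self_mem_nhdsWithin] with t ht
  simp [slope_def_field, div_eq_inv_mul]

/-- `log (arsinh t / t)/t² → -1/6` as `t → 0`. -/
lemma tendsto_log_arsinh_div : Tendsto (fun t : ℝ => Real.log (Real.arsinh t / t) / t ^ 2)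
    (nhdsWithin 0 {(0:ℝ)}ᶜ) (nhds (-(1/6))) := by
  have hu : Tendsto (fun t : ℝ => Real.arsinh t / t - 1)
      (nhdsWithin 0 {(0:ℝ)}ᶜ) (nhdsWithin 0 {(0:ℝ)}ᶜ) := by
    rw [tendsto_nhdsWithin_iff]
    constructor
    · simpa using tendsto_arsinh_div.sub_const 1
    · filter_upwards [self_mem_nhdsWithin] with t ht
      simp only [Set.mem_compl_iff, Set.mem_singleton_iff] at ht ⊢
      intro h
      apply arsinh_ne_self ht
      have : Real.arsinh t / t = 1 := by linarith [sub_eq_zero.mp h]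
      field_simp at this
      exact this
  have h1 := tendsto_log_one_add.comp hu
  have h2 : Tendsto (fun t : ℝ => (Real.arsinh t / t - 1) / t ^ 2)
      (nhdsWithin 0 {(0:ℝ)}ᶜ) (nhds (-(1/6))) := by
    refine tendsto_arsinh_sub_div.congr' ?_
    filter_upwards [self_mem_nhdsWithin] with t ht
    simp only [Set.mem_compl_iff, Set.mem_singleton_iff] at ht
    rw [div_sub_one ht, div_div, ← pow_succ']
  have h3 := h1.mul h2
  norm_num at h3
  refine h3.congr' ?_
  filter_upwards [hu.eventually self_mem_nhdsWithin, self_mem_nhdsWithin] with t hne ht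
  simp only [Set.mem_compl_iff, Set.mem_singleton_iff] at hne ht
  rw [div_mul_div_cancel₀ hne]

/-- `log (1+t²)/t² → 1` as `t → 0`. -/
lemma tendsto_log_one_add_sq : Tendsto (fun t : ℝ => Real.log (1 + t ^ 2) / t ^ 2)
    (nhdsWithin 0 {(0:ℝ)}ᶜ) (nhds 1) := by
  have hsq : Tendsto (fun t : ℝ => t ^ 2) (nhdsWithin 0 {(0:ℝ)}ᶜ)
      (nhdsWithin 0 {(0:ℝ)}ᶜ) := by
    rw [tendsto_nhdsWithin_iff]
    constructor
    · simpa using ((continuous_pow 2).tendsto (0:ℝ)).mono_left nhdsWithin_le_nhds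
    · filter_upwards [self_mem_nhdsWithin] with t ht
      simp only [Set.mem_compl_iff, Set.mem_singleton_iff] at ht ⊢
      exact pow_ne_zero 2 ht
  exact tendsto_log_one_add.comp hsq

/-- Interior boundary condition: `I¹(x,y) → κ²/12 + η μ y²/2` as `x → 0`. -/
theorem I1_interior_boundary (κ η μ : ℝ) (hκ : 0 < κ) (y : ℝ) (hy : 0 < y) :
    Tendsto (fun x : ℝ => I1HW κ η μ x y) (nhdsWithin 0 {(0 : ℝ)}ᶜ)
      (nhds (κ ^ 2 / 12 + η * μ * y ^ 2 / 2)) := by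
  have hκ' : κ ≠ 0 := hκ.ne'
  have hy' : y ≠ 0 := hy.ne'
  set d : ℝ := η * μ * y ^ 2 / (2 * κ ^ 2) with hd
  have hF : Tendsto (fun t : ℝ => κ ^ 2 * ((Real.arsinh t / t)⁻¹) ^ 2 *
      (Real.log (Real.arsinh t / t) / t ^ 2 + 1 / 4 * (Real.log (1 + t ^ 2) / t ^ 2) + d))
      (nhdsWithin 0 {(0:ℝ)}ᶜ) (nhds (κ ^ 2 / 12 + η * μ * y ^ 2 / 2)) := by
    have h1 := (tendsto_const_nhds (x := κ ^ 2) (f := nhdsWithin 0 {(0:ℝ)}ᶜ)).mul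
        ((tendsto_arsinh_div.inv₀ one_ne_zero).pow 2) |>.mul
        ((tendsto_log_arsinh_div.add
          ((tendsto_const_nhds (x := (1:ℝ)/4)).mul tendsto_log_one_add_sq)).add
          (tendsto_const_nhds (x := d)))
    convert h1 using 2
    rw [hd]
    field_simp
    ring
  have htm : Tendsto (fun x : ℝ => κ * x / y) (nhdsWithin 0 {(0:ℝ)}ᶜ)
      (nhdsWithin 0 {(0:ℝ)}ᶜ) := by
    rw [tendsto_nhdsWithin_iff]
    constructor
    · have hc : Continuous fun x : ℝ => κ * x / y := by fun_prop
      simpa using (hc.tendsto 0).mono_left nhdsWithin_le_nhds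
    · filter_upwards [self_mem_nhdsWithin] with x hx
      simp only [Set.mem_compl_iff, Set.mem_singleton_iff] at hx ⊢
      exact div_ne_zero (mul_ne_zero hκ' hx) hy'
  refine (hF.comp htm).congr' ?_
  filter_upwards [self_mem_nhdsWithin] with x hx
  simp only [Set.mem_compl_iff, Set.mem_singleton_iff] at hx
  simp only [Function.comp_apply, I1HW, psiHW]
  set t := κ * x / y with htdef
  have htne : t ≠ 0 := div_ne_zero (mul_ne_zero hκ' hx) hy'
  have hA : Real.arsinh t ≠ 0 := fun h => htne (Real.arsinh_eq_zero_iff.mp h)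
  have hApos : 0 < Real.arsinh t / t := by
    rcases htne.lt_or_gt with h | h
    · exact div_pos_of_neg_of_neg (Real.arsinh_neg_iff.mpr h) h
    · exact div_pos (Real.arsinh_pos_iff.mpr h) h
  have h1t : (0:ℝ) < 1 + t ^ 2 := by positivity
  have e1 : y / x * (1 / κ * Real.arsinh t) = Real.arsinh t / t := by
    rw [htdef]
    field_simp
  have e2 : κ ^ 2 * x ^ 2 / y ^ 2 = t ^ 2 := by
    rw [htdef]
    field_simp
  have ex2 : η * μ * x ^ 2 / 2 = d * t ^ 2 := by
    rw [hd, htdef]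
    field_simp
  rw [e1, e2, ex2,
    Real.log_mul (ne_of_gt hApos) (ne_of_gt (Real.rpow_pos_of_pos h1t _)),
    Real.log_rpow h1t, zpow_neg, zpow_two]
  field_simp
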